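/- Let X and Y be random variables over [M] with statistical distance Δ(X,Y) = ε. Then there exists a randomized function f:[M]→{0,1} such that f(Y) is uniform on {0,1} and Δ(f(X), f(Y)) ≥ ε/2. -/

import Mathlib

open Finset

/-- if `Δ(X,Y) = ε`, there is a randomized boolean function `f`
(given by the probability `f x` of outputting 1 on input `x`) such that
`f(Y)` is a uniform coin and `Δ(f(X), f(Y)) ≥ ε/2`. -/
theorem stmt10 {M : ℕ} (ε : ℝ)
    (p q : Fin M → ℝ)
    (hp0 : ∀ x, 0 ≤ p x) (hp1 : ∑ x, p x = 1)
    (hq0 : ∀ x, 0 ≤ q x) (hq1 : ∑ x, q x = 1)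
    (hsd : (1 / 2 : ℝ) * ∑ x, |p x - q x| = ε) :
    ∃ f : Fin M → ℝ, (∀ x, 0 ≤ f x ∧ f x ≤ 1) ∧
      (∑ x, q x * f x = 1 / 2) ∧
      |(∑ x, p x * f x) - (∑ x, q x * f x)| ≥ ε / 2 := by
  classical
  set A : Finset (Fin M) := univ.filter (fun x => q x < p x) with hA
  set B : Finset (Fin M) := univ.filter (fun x => ¬ q x < p x) with hB
  have key : ∀ (g : Fin M → ℝ) (a b : ℝ),
      ∑ x, g x * (if q x < p x then a else b)
        = (∑ x ∈ A, g x) * a + (∑ x ∈ B, g x) * b := by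
    intro g a b
    simp_rw [mul_ite]
    rw [Finset.sum_ite, ← Finset.sum_mul, ← Finset.sum_mul]
  have hsplit : ∀ g : Fin M → ℝ, ∑ x, g x = ∑ x ∈ A, g x + ∑ x ∈ B, g x := by
    intro g
    exact (Finset.sum_filter_add_sum_filter_not _ _ _).symm
  have hpq0 : ∑ x ∈ A, (p x - q x) + ∑ x ∈ B, (p x - q x) = 0 := by
    rw [← hsplit]
    rw [Finset.sum_sub_distrib, hp1, hq1]; ring
  have habs : ∑ x, |p x - q x|
      = ∑ x ∈ A, (p x - q x) - ∑ x ∈ B, (p x - q x) := by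
    rw [hsplit (fun x => |p x - q x|)]
    congr 1
    · apply Finset.sum_congr rfl
      intro x hx
      simp only [hA, Finset.mem_filter] at hx
      exact abs_of_pos (by linarith [hx.2])
    · rw [← Finset.sum_neg_distrib]
      apply Finset.sum_congr rfl
      intro x hx
      simp only [hB, Finset.mem_filter, not_lt] at hx
      rw [abs_of_nonpos (by linarith [hx.2])]
  have hεA : ∑ x ∈ A, (p x - q x) = ε := by
    rw [habs] at hsd; linarith
  have hεB : ∑ x ∈ B, (p x - q x) = -ε := by linarith
  have hε0 : 0 ≤ ε := by
    rw [← hsd]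
    have : 0 ≤ ∑ x, |p x - q x| := Finset.sum_nonneg (fun x _ => abs_nonneg _)
    linarith
  set s : ℝ := ∑ x ∈ A, q x with hs
  have hs0 : 0 ≤ s := Finset.sum_nonneg (fun x _ => hq0 x)
  have hs1 : s ≤ 1 := by
    rw [← hq1]
    exact Finset.sum_le_sum_of_subset_of_nonneg (Finset.subset_univ _)
      (fun x _ _ => hq0 x)
  have hsB : ∑ x ∈ B, q x = 1 - s := by
    have := hsplit q
    rw [hq1] at this
    linarith
  have hAp : ∑ x ∈ A, p x = ε + s := by
    have := Finset.sum_sub_distrib (s := A) (f := p) (g := q)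
    rw [hεA] at *
    linarith [hεA]
  have hBp : ∑ x ∈ B, p x = (1 - s) - ε := by
    have h := Finset.sum_sub_distrib (s := B) (f := p) (g := q)
    rw [hεB, hsB] at h
    linarith
  have hAq : ∑ x ∈ A, (p x - q x) = ∑ x ∈ A, p x - ∑ x ∈ A, q x :=
    Finset.sum_sub_distrib _ _
  have hBq : ∑ x ∈ B, (p x - q x) = ∑ x ∈ B, p x - ∑ x ∈ B, q x :=
    Finset.sum_sub_distrib _ _
  have hAp' : ∑ x ∈ A, p x = ε + s := by rw [hAq] at hεA; linarith
  have hBp' : ∑ x ∈ B, p x = (1 - s) - ε := by rw [hBq] at hεB; linarith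
  by_cases hc : s ≤ 1 / 2
  · -- f = 1 on A, c on B
    have h1s : (0:ℝ) < 1 - s := by linarith
    set c : ℝ := (1 / 2 - s) / (1 - s) with hcdef
    have hc0 : 0 ≤ c := div_nonneg (by linarith) h1s.le
    have hchalf : c ≤ 1 / 2 := by
      rw [hcdef, div_le_iff₀ h1s]; linarith
    have hcmul : c * (1 - s) = 1 / 2 - s := by
      rw [hcdef, div_mul_cancel₀ _ (ne_of_gt h1s)]
    refine ⟨fun x => if q x < p x then 1 else c, ?_, ?_, ?_⟩
    · intro x
      dsimp only
      split_ifs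
      · exact ⟨zero_le_one, le_refl 1⟩
      · exact ⟨hc0, by linarith⟩
    · rw [key q 1 c, ← hs, hsB]
      linarith [hcmul]
    · rw [key p 1 c, key q 1 c, ← hs, hsB, hAp', hBp']
      have heq : (ε + s) * 1 + ((1 - s) - ε) * c - (s * 1 + (1 - s) * c)
          = ε * (1 - c) := by ring
      rw [heq, abs_of_nonneg (mul_nonneg hε0 (by linarith))]
      nlinarith
  · -- f = c on A, 0 on B
    push_neg at hc
    have hspos : (0:ℝ) < s := by linarith
    set c : ℝ := 1 / (2 * s) with hcdef
    have hc0 : 0 ≤ c := by positivity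
    have hc1 : c ≤ 1 := by
      rw [hcdef, div_le_one (by linarith)]; linarith
    have hchalf : 1 / 2 ≤ c := by
      rw [hcdef, le_div_iff₀ (by linarith)]; nlinarith
    have hcs : s * c = 1 / 2 := by
      rw [hcdef]; field_simp
    refine ⟨fun x => if q x < p x then c else 0, ?_, ?_, ?_⟩
    · intro x
      dsimp only
      split_ifs
      · exact ⟨hc0, hc1⟩
      · exact ⟨le_refl 0, zero_le_one⟩
    · rw [key q c 0, ← hs]
      simpa using hcs
    · rw [key p c 0, key q c 0, ← hs, hAp']
      have heq : (ε + s) * c + (∑ x ∈ B, p x) * 0 - (s * c + (∑ x ∈ B, q x) * 0)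
          = ε * c := by ring
      rw [heq, abs_of_nonneg (mul_nonneg hε0 hc0)]
      nlinarith
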